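/- The composite functor Dtry = Option ∘ Dtry≠∅ carries a monad structure, with unit x ↦ some (Pure x) and multiplication induced by the distributive law distrib : Dtry≠∅ ∘ Option → Option ∘ Dtry≠∅ together with the monad structures of Option and Dtry≠∅; this structure satisfies the monad laws. -/

import Mathlib

/- Nonempty finite maps from strings to `b` are modeled as a nonempty finite key set
`s : Finset String` together with a value function `(k : String) → k ∈ s → b`. -/

/-- `DtryNE a = Free Record≠∅ a`: the free monad on nonempty finite string maps. -/
inductive DtryNE (a : Type) : Type
  | pure : a → DtryNE a
  | join : (s : Finset String) → s.Nonempty → ((k : String) → k ∈ s → DtryNE a) → DtryNE a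

namespace DtryNE

variable {a b : Type}

/-- Functorial action. -/
def map (g : a → b) : DtryNE a → DtryNE b
  | .pure x => .pure (g x)
  | .join s hs f => .join s hs fun k h => (f k h).map g

/-- Monad multiplication of the free monad. -/
def mu : DtryNE (DtryNE a) → DtryNE a
  | .pure x => x
  | .join s hs f => .join s hs fun k h => (f k h).mu

attribute [local instance] Classical.propDecidable

/-- `distrib`: recursively filter out `none` leaves, returning `none` if everything
is filtered away.  At a node, `filterNothings` keeps exactly the keys whose subtree
survives, and fails if no key survives. -/
noncomputable def distrib : DtryNE (Option a) → Option (DtryNE a)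
  | .pure mx => mx.map .pure
  | .join s _ f =>
      let g : (k : String) → k ∈ s → Option (DtryNE a) := fun k h => distrib (f k h)
      let s' : Finset String := s.filter (fun k => ∃ h : k ∈ s, (g k h).isSome)
      if h' : s'.Nonempty then
        some (.join s' h' (fun k hk => (g k (by
            have := (Finset.mem_filter.mp hk).1; exact this)).get (by
            have := (Finset.mem_filter.mp hk).2; exact this.choose_spec)))
      else none

-- basic lemmas
variable {c : Type}

theorem join_heq {s₁ s₂ : Finset String} {h₁ : s₁.Nonempty} {h₂ : s₂.Nonempty}
    {f₁ : (k : String) → k ∈ s₁ → DtryNE a} {f₂ : (k : String) → k ∈ s₂ → DtryNE a}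
    (hs : s₁ = s₂) (H : ∀ k (hk₁ : k ∈ s₁) (hk₂ : k ∈ s₂), f₁ k hk₁ = f₂ k hk₂) :
    join s₁ h₁ f₁ = join s₂ h₂ f₂ := by
  subst hs
  congr 1
  funext k hk
  exact H k hk hk

theorem map_map (g : a → b) (h : b → c) (t : DtryNE a) :
    (t.map g).map h = t.map (fun x => h (g x)) := by
  induction t with
  | pure x => rfl
  | join s hs f ih => simp only [map]; exact join_heq rfl fun k hk _ => ih k hk

theorem mu_map_pure (t : DtryNE a) : mu (map pure t) = t := by
  induction t with
  | pure x => rfl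
  | join s hs f ih => simp only [map, mu]; exact join_heq rfl fun k hk _ => ih k hk

theorem mu_assoc (t : DtryNE (DtryNE (DtryNE a))) : mu (mu t) = mu (t.map mu) := by
  induction t with
  | pure x => rfl
  | join s hs f ih => simp only [map, mu]; exact join_heq rfl fun k hk _ => ih k hk

theorem distrib_join (s : Finset String) (hs : s.Nonempty) (f : (k : String) → k ∈ s → DtryNE (Option a)) :
    distrib (.join s hs f) =
      if h' : (s.filter (fun k => ∃ h : k ∈ s, (distrib (f k h)).isSome)).Nonempty then
        some (.join _ h' (fun k hk => (distrib (f k (Finset.mem_filter.mp hk).1)).get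
          ((Finset.mem_filter.mp hk).2.choose_spec)))
      else none := rfl

end DtryNE

namespace DtryNE
attribute [local instance] Classical.propDecidable
variable {a b : Type}

theorem get_map {o : Option a} {g : a → b} (h₁ : o.isSome) (h₂ : (Option.map g o).isSome) :
    (Option.map g o).get h₂ = g (o.get h₁) := by
  cases o
  · simp at h₁
  · rfl

theorem distrib_natural (g : a → b) (t : DtryNE (Option a)) :
    distrib (t.map (Option.map g)) = Option.map (map g) (distrib t) := by
  induction t with
  | pure mx => cases mx <;> rfl
  | join s hs f ih =>
    simp only [map, distrib_join]
    have hP : (fun k => ∃ h : k ∈ s, (distrib ((f k h).map (Option.map g))).isSome)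
            = (fun k => ∃ h : k ∈ s, (distrib (f k h)).isSome) := by
      funext k; apply propext
      have key : ∀ h : k ∈ s, (distrib ((f k h).map (Option.map g))).isSome
               = (distrib (f k h)).isSome := fun h => by rw [ih k h, Option.isSome_map]
      constructor
      · rintro ⟨h, hh⟩; exact ⟨h, (key h) ▸ hh⟩
      · rintro ⟨h, hh⟩; exact ⟨h, (key h).symm ▸ hh⟩
    have hS : (s.filter (fun k => ∃ h : k ∈ s, (distrib ((f k h).map (Option.map g))).isSome))
            = (s.filter (fun k => ∃ h : k ∈ s, (distrib (f k h)).isSome)) := by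
      simp only [hP]
    by_cases h' : (s.filter (fun k => ∃ h : k ∈ s, (distrib (f k h)).isSome)).Nonempty
    · rw [dif_pos (show _ from hS ▸ h'), dif_pos h']
      simp only [Option.map_some]
      apply congrArg
      refine join_heq hS ?_
      intro k hk₁ hk₂
      simp only [map]
      have e := ih k (Finset.mem_filter.mp hk₁).1
      simp only [e]
      exact get_map _ _
    · rw [dif_neg (show _ from hS ▸ h'), dif_neg h']
      rfl

theorem isSome_of_bind {o : Option a} {g : a → Option b} (h : (o.bind g).isSome) : o.isSome := by
  cases o <;> simp_all

theorem bind_get {o : Option a} (g : a → Option b) (h : o.isSome) :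
    o.bind g = g (o.get h) := by
  cases o
  · simp at h
  · rfl

theorem dite_join_ext {s₁ s₂ : Finset String}
    {f₁ : (k : String) → k ∈ s₁ → DtryNE a} {f₂ : (k : String) → k ∈ s₂ → DtryNE a}
    (hS : s₁ = s₂) (hf : ∀ k (h₁ : k ∈ s₁) (h₂ : k ∈ s₂), f₁ k h₁ = f₂ k h₂) :
    (if h : s₁.Nonempty then some (join s₁ h f₁) else (none : Option (DtryNE a))) =
    (if h : s₂.Nonempty then some (join s₂ h f₂) else none) := by
  subst hS
  by_cases h : s₁.Nonempty
  · rw [dif_pos h, dif_pos h]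
    exact congrArg some (join_heq rfl hf)
  · rw [dif_neg h, dif_neg h]

theorem distrib_map_some (t : DtryNE a) : distrib (t.map some) = some t := by
  induction t with
  | pure x => rfl
  | join s hs f ih =>
    simp only [map, distrib_join]
    have hS : (s.filter (fun k => ∃ h : k ∈ s, (distrib ((f k h).map some)).isSome)) = s := by
      apply Finset.filter_true_of_mem
      intro k hk
      exact ⟨hk, by rw [ih k hk]; rfl⟩
    have step : (if h' : (s.filter (fun k => ∃ h : k ∈ s, (distrib ((f k h).map some)).isSome)).Nonempty then
        some (.join _ h' (fun k hk => (distrib ((f k (Finset.mem_filter.mp hk).1).map some)).get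
          ((Finset.mem_filter.mp hk).2.choose_spec)))
      else none) = if h : s.Nonempty then some (join s h f) else none := by
      apply dite_join_ext hS
      intro k hk₁ hk₂
      simp only [ih]
      rfl
    rw [step, dif_pos hs]

theorem get_congr {o₁ o₂ : Option a} (h : o₁ = o₂) (h₁ : o₁.isSome) (h₂ : o₂.isSome) :
    o₁.get h₁ = o₂.get h₂ := by subst h; rfl

theorem distrib_mu (t : DtryNE (DtryNE (Option a))) :
    distrib (mu t) = Option.map mu (distrib (t.map distrib)) := by
  induction t with
  | pure u =>
    show distrib u = Option.map mu (Option.map DtryNE.pure (distrib u))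
    cases distrib u <;> rfl
  | join s hs f ih =>
    simp only [mu, map, distrib_join]
    rw [apply_dite (Option.map mu)]
    simp only [Option.map_some, Option.map_none, mu]
    have hS : (s.filter (fun k => ∃ h : k ∈ s, (distrib (mu (f k h))).isSome))
            = (s.filter (fun k => ∃ h : k ∈ s, (distrib ((f k h).map distrib)).isSome)) := by
      apply Finset.filter_congr
      intro k _
      have key : ∀ h : k ∈ s, (distrib (mu (f k h))).isSome
               = (distrib ((f k h).map distrib)).isSome := fun h => by
        rw [ih k h, Option.isSome_map]
      constructor
      · rintro ⟨h, hh⟩; exact ⟨h, (key h) ▸ hh⟩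
      · rintro ⟨h, hh⟩; exact ⟨h, (key h).symm ▸ hh⟩
    apply dite_join_ext hS
    intro k hk₁ hk₂
    simp only [ih]
    exact get_map _ _

theorem distrib_map_join (t : DtryNE (Option (Option a))) :
    distrib (t.map Option.join) = (distrib t).bind distrib := by
  induction t with
  | pure mx => cases mx <;> rfl
  | join s hs f ih =>
    simp only [map, distrib_join]
    by_cases h₂ : (s.filter (fun k => ∃ h : k ∈ s, (distrib (f k h)).isSome)).Nonempty
    · rw [dif_pos h₂, Option.bind_some, distrib_join]
      apply dite_join_ext
      · -- set equality
        ext k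
        constructor
        · intro hk₁
          have hks := (Finset.mem_filter.mp hk₁).1
          obtain ⟨h, hh⟩ := (Finset.mem_filter.mp hk₁).2
          rw [ih k h] at hh
          have h1 : (distrib (f k h)).isSome := isSome_of_bind hh
          have hk₂ : k ∈ s.filter (fun k => ∃ h : k ∈ s, (distrib (f k h)).isSome) :=
            Finset.mem_filter.mpr ⟨hks, h, h1⟩
          refine Finset.mem_filter.mpr ⟨hk₂, ⟨hk₂, ?_⟩⟩
          rw [bind_get distrib h1] at hh
          exact hh
        · intro hk₃
          have hk₂ := (Finset.mem_filter.mp hk₃).1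
          obtain ⟨hk₂', hq⟩ := (Finset.mem_filter.mp hk₃).2
          have hks := (Finset.mem_filter.mp hk₂).1
          obtain ⟨h, h1⟩ := (Finset.mem_filter.mp hk₂).2
          refine Finset.mem_filter.mpr ⟨hks, h, ?_⟩
          rw [ih k h, bind_get distrib h1]
          exact hq
      · intro k hk₁ hk₃
        have h1 : (distrib (f k (Finset.mem_filter.mp hk₁).1)).isSome :=
          (Finset.mem_filter.mp (Finset.mem_filter.mp hk₃).1).2.choose_spec
        refine get_congr ?_ _ _
        rw [ih k (Finset.mem_filter.mp hk₁).1, bind_get distrib h1]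
    · rw [dif_neg h₂]
      rw [dif_neg]
      · rfl
      · intro hne
        apply h₂
        refine hne.mono ?_
        intro k hk
        have hks := (Finset.mem_filter.mp hk).1
        obtain ⟨h, hh⟩ := (Finset.mem_filter.mp hk).2
        rw [ih k h] at hh
        exact Finset.mem_filter.mpr ⟨hks, h, isSome_of_bind hh⟩

end DtryNE


/-- The directory monad: `Dtry = Option ∘ Dtry≠∅`. -/
def Dtry (a : Type) : Type := Option (DtryNE a)

namespace Dtry

variable {a b : Type}

/-- Functorial action of `Dtry`. -/
def map (g : a → b) : Dtry a → Dtry b := Option.map (DtryNE.map g)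

/-- Unit: `x ↦ some (Pure x)`. -/
def pure (x : a) : Dtry a := some (DtryNE.pure x)

/-- Multiplication, induced by the distributive law `distrib` together with the
monad structures of `Option` and `Dtry≠∅`. -/
noncomputable def mu (d : Dtry (Dtry a)) : Dtry a :=
  Option.map DtryNE.mu (Option.join (Option.map DtryNE.distrib d))

end Dtry

/-- the composite `Dtry = Option ∘ Dtry≠∅`, with unit `x ↦ some (Pure x)`
and multiplication induced by the distributive law, satisfies the monad laws. -/
theorem dtry_is_monad {a : Type} :
    (∀ d : Dtry a, Dtry.mu (Dtry.pure d) = d) ∧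
    (∀ d : Dtry a, Dtry.mu (d.map Dtry.pure) = d) ∧
    (∀ d : Dtry (Dtry (Dtry a)), d.mu.mu = (d.map Dtry.mu).mu) := by
  have mu_eq : ∀ {α : Type} (o : Dtry (Dtry α)),
      Dtry.mu o = Option.map DtryNE.mu (o.bind DtryNE.distrib) := fun o => by
    cases o <;> rfl
  have bind_map : ∀ {α β γ : Type} (g : α → β) (o : Option α) (h : β → Option γ),
      (Option.map g o).bind h = o.bind (fun x => h (g x)) := fun g o h => by
    cases o <;> rfl
  refine ⟨?_, ?_, ?_⟩
  · intro d
    cases d <;> rfl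
  · intro d
    cases d with
    | none => rfl
    | some t =>
      show Option.map DtryNE.mu (DtryNE.distrib (t.map Dtry.pure)) = some t
      have h1 : t.map Dtry.pure = (t.map DtryNE.pure).map some := (DtryNE.map_map DtryNE.pure some t).symm
      erw [h1]; rw [DtryNE.distrib_map_some, Option.map_some, DtryNE.mu_map_pure]
  · intro d
    cases d with
    | none => rfl
    | some t =>
      show Dtry.mu (Option.map DtryNE.mu (DtryNE.distrib t))
         = Option.map DtryNE.mu (DtryNE.distrib (t.map Dtry.mu))
      have core : DtryNE.distrib (t.map (fun o => o.bind DtryNE.distrib))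
          = (DtryNE.distrib t).bind (fun v => DtryNE.distrib (v.map DtryNE.distrib)) := by
        have hfun : (fun o : Dtry (Dtry a) => Option.bind o DtryNE.distrib)
            = fun o => Option.join (Option.map DtryNE.distrib o) := funext fun o => by cases o <;> rfl
        erw [hfun, ← DtryNE.map_map (Option.map DtryNE.distrib) Option.join t,
          DtryNE.distrib_map_join, DtryNE.distrib_natural, bind_map]
        rfl
      have hmu2 : t.map Dtry.mu
          = (t.map (fun o => o.bind DtryNE.distrib)).map (Option.map DtryNE.mu) := by
        rw [DtryNE.map_map]
        exact congrArg (fun g => DtryNE.map g t) (funext fun o => mu_eq o)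
      erw [mu_eq, bind_map, hmu2, DtryNE.distrib_natural, core]
      cases DtryNE.distrib t with
      | none => rfl
      | some v =>
        simp only [Option.bind_some]
        erw [DtryNE.distrib_mu v]
        cases DtryNE.distrib (v.map DtryNE.distrib) with
        | none => rfl
        | some w => simp [DtryNE.mu_assoc]; rfl
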